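/- Let A be a finite central arrangement of complexified hyperplanes and C a chamber of A. Then the subposet S_C := S(A)_{≤ [P, C]} of the Salvetti poset, where P = ∩A is the minimal face, is isomorphic to the opposite of the face poset F(A): explicitly, the map F ↦ [F, C_F] is an order-reversing bijection from F(A) onto S_C. -/
import Mathlib

open Filter Topology



/-! STATEMENT 19: For a central complexified arrangement `A` and a chamber `C`, the map
`F ↦ [F, C_F]` is an order-reversing bijection from the face poset `F(A)` onto the
subposet `S_C = S(A)_{≤ [P, C]}` of the Salvetti poset, where `P = ∩A` is the minimal
face (with identically zero sign vector). -/

def evalForm {d : ℕ} {ι : Type} (a : ι → Fin d → ℝ) (i : ι) (x : Fin d → ℝ) : ℝ :=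
  ∑ k, a i k * x k

def IsFace {d : ℕ} {ι : Type} (a : ι → Fin d → ℝ) (σ : ι → SignType) : Prop :=
  ∃ x : Fin d → ℝ, ∀ i, SignType.sign (evalForm a i x) = σ i

def IsChamber {d : ℕ} {ι : Type} (a : ι → Fin d → ℝ) (σ : ι → SignType) : Prop :=
  IsFace a σ ∧ ∀ i, σ i ≠ 0

def faceLE {ι : Type} (σ τ : ι → SignType) : Prop :=
  ∀ i, σ i = 0 ∨ σ i = τ i

/-- Composition `K_F` of sign vectors (`K` where `F` vanishes, `F` elsewhere). -/
def faceComp {ι : Type} (K F : ι → SignType) : ι → SignType :=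
  fun i => if F i = 0 then K i else F i

/-- The order of the Salvetti poset: `(F', K') ≤ (F, K)` iff `F ≤ F'` and `K_{F'} = K'`. -/
def salLE {ι : Type} (x y : (ι → SignType) × (ι → SignType)) : Prop :=
  faceLE y.1 x.1 ∧ faceComp y.2 x.1 = x.2

lemma sign_add_of_abs_lt' {x b : ℝ} (h : |b| < |x|) :
    SignType.sign (x + b) = SignType.sign x := by
  rcases lt_trichotomy x 0 with hx | hx | hx
  · have hx' : |x| = -x := abs_of_neg hx
    have : x + b < 0 := by
      have := lt_of_abs_lt (hx' ▸ h)
      linarith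
    rw [sign_neg this, sign_neg hx]
  · subst hx; rw [abs_zero] at h; exact absurd h (abs_nonneg b).not_gt
  · have hx' : |x| = x := abs_of_pos hx
    have : 0 < x + b := by
      have := neg_lt_of_abs_lt (hx' ▸ h)
      linarith
    rw [sign_pos this, sign_pos hx]

lemma evalForm_add_smul {d : ℕ} {ι : Type} (a : ι → Fin d → ℝ) (i : ι)
    (x y : Fin d → ℝ) (ε : ℝ) :
    evalForm a i (fun k => x k + ε * y k) = evalForm a i x + ε * evalForm a i y := by
  unfold evalForm
  rw [Finset.mul_sum, ← Finset.sum_add_distrib]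
  exact Finset.sum_congr rfl fun k _ => by ring

lemma perturb {d : ℕ} {ι : Type} [Fintype ι] (a : ι → Fin d → ℝ)
    (x y : Fin d → ℝ) :
    ∃ ε : ℝ, 0 < ε ∧ ∀ i, SignType.sign (evalForm a i x + ε * evalForm a i y) =
      if evalForm a i x = 0 then SignType.sign (evalForm a i y)
      else SignType.sign (evalForm a i x) := by
  have hall : ∀ i, ∀ᶠ ε in 𝓝[>] (0:ℝ),
      SignType.sign (evalForm a i x + ε * evalForm a i y) =
      if evalForm a i x = 0 then SignType.sign (evalForm a i y)
      else SignType.sign (evalForm a i x) := by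
    intro i
    by_cases h : evalForm a i x = 0
    · filter_upwards [self_mem_nhdsWithin] with ε (hε : ε ∈ Set.Ioi (0:ℝ))
      simp [h, sign_mul, sign_pos (Set.mem_Ioi.mp hε)]
    · set X := evalForm a i x
      set Y := evalForm a i y
      have hX : 0 < |X| := abs_pos.mpr h
      have hδ : (0:ℝ) < |X| / (|Y| + 1) := by positivity
      have hmem : Set.Ioo (0:ℝ) (|X| / (|Y| + 1)) ∈ 𝓝[>] (0:ℝ) :=
        Ioo_mem_nhdsGT_of_mem ⟨le_refl _, hδ⟩
      filter_upwards [hmem] with ε hε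
      have hε0 : 0 < ε := hε.1
      have habs : |ε * Y| < |X| := by
        rw [abs_mul, abs_of_pos hε0]
        calc ε * |Y| ≤ ε * (|Y| + 1) := by nlinarith
          _ < (|X| / (|Y| + 1)) * (|Y| + 1) := by
              apply mul_lt_mul_of_pos_right hε.2; positivity
          _ = |X| := div_mul_cancel₀ _ (by positivity)
      rw [if_neg h]
      exact sign_add_of_abs_lt' habs
  have := (Filter.eventually_all.mpr hall).and self_mem_nhdsWithin
  obtain ⟨ε, hsign, hε⟩ := this.exists
  exact ⟨ε, hε, hsign⟩

/-- Let `A` be a finite central complexified arrangement with minimal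
face `P = ∩A` (sign vector `0`) and let `C` be a chamber.  The map `F ↦ [F, C_F]` is a
bijection from the face poset of `A` onto `S_C = S(A)_{≤ [P,C]}`, and it reverses order:
`F₁ ≤ F₂` iff `[F₂, C_{F₂}] ≤ [F₁, C_{F₁}]` in the Salvetti poset. -/
theorem salvetti_cell_faces {d : ℕ} {ι : Type} [Fintype ι]
    (a : ι → Fin d → ℝ) (ha : ∀ i, a i ≠ 0)
    (C : ι → SignType) (hC : IsChamber a C) :
    -- the map is well defined, landing in the Salvetti poset below `[P, C]`
    (∀ F, IsFace a F →
      IsChamber a (faceComp C F) ∧ faceLE F (faceComp C F) ∧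
        salLE (F, faceComp C F) (fun _ => 0, C)) ∧
    -- injectivity
    (∀ F₁ F₂, IsFace a F₁ → IsFace a F₂ →
      (F₁, faceComp C F₁) = (F₂, faceComp C F₂) → F₁ = F₂) ∧
    -- surjectivity onto `S_C`
    (∀ F' K', IsFace a F' → IsChamber a K' → faceLE F' K' →
      salLE (F', K') (fun _ => 0, C) → K' = faceComp C F') ∧
    -- order-reversing in both directions
    (∀ F₁ F₂, IsFace a F₁ → IsFace a F₂ →
      (faceLE F₁ F₂ ↔ salLE (F₂, faceComp C F₂) (F₁, faceComp C F₁))) := by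
  obtain ⟨⟨y, hy⟩, hCnz⟩ := hC
  refine ⟨?_, ?_, ?_, ?_⟩
  · rintro F ⟨x, hx⟩
    refine ⟨⟨?_, ?_⟩, ?_, ?_⟩
    · obtain ⟨ε, hε, hsign⟩ := perturb a x y
      refine ⟨fun k => x k + ε * y k, fun i => ?_⟩
      rw [evalForm_add_smul, hsign i, faceComp]
      by_cases h : F i = 0
      · rw [if_pos h, if_pos, hy]
        rw [← hx i, sign_eq_zero_iff] at h; exact h
      · rw [if_neg h, if_neg, hx]
        rw [← hx i, sign_eq_zero_iff] at h; exact h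
    · intro i
      unfold faceComp
      by_cases h : F i = 0
      · simpa [h] using hCnz i
      · simpa [h] using h
    · intro i
      by_cases h : F i = 0
      · exact Or.inl h
      · exact Or.inr (by simp [faceComp, h])
    · exact ⟨fun i => Or.inl rfl, rfl⟩
  · intro F₁ F₂ _ _ h
    exact congrArg Prod.fst h
  · rintro F' K' _ _ _ ⟨_, h⟩
    exact h.symm
  · intro F₁ F₂ _ _
    constructor
    · intro h
      refine ⟨h, funext fun i => ?_⟩
      simp only [faceComp]
      by_cases h2 : F₂ i = 0
      · have h1 : F₁ i = 0 := (h i).elim id (fun e => e.trans h2)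
        simp [h1, h2]
      · simp [h2]
    · exact fun h => h.1
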